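/- arXiv:2211.02755 — 3 statements merged into one kernel-verified Lean document; each statement's English description precedes it below -/
import Mathlib

section
/- Let M be a matroid with finite ground set E, let v : E → ℝ be a weight function taking nonnegative values that is injective on E, and let T ⊆ S ⊆ E. If B_S is a max-weight basis of S and B_T is a max-weight basis of T, then B_S ∩ T ⊆ B_T. -/
open scoped BigOperators

open Set

/-- `B` is a max-weight basis of `S` in the matroid `M` w.r.t. the weight function `v`:
`B` is a basis of `S` (a maximal `M`-independent subset of `S`) and every basis `B'`
of `S` has total weight at most that of `B`. -/
def IsMaxWeightBasis {α : Type*} (M : Matroid α) (v : α → ℝ) (S B : Set α) : Prop :=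
  M.IsBasis B S ∧ ∀ B' : Set α, M.IsBasis B' S → ∑ᶠ x ∈ B', v x ≤ ∑ᶠ x ∈ B, v x

/-- Exchange lemma: for a max-weight basis `B` of `S` w.r.t. an injective weight function,
every `e ∈ S \ B` lies in the closure of the elements of `B` of weight strictly larger. -/
lemma mem_closure_heavier {α : Type*} (M : Matroid α) (hE : M.E.Finite)
    (v : α → ℝ) (hvinj : Set.InjOn v M.E) (S : Set α) (hSE : S ⊆ M.E)
    (B : Set α) (hB : IsMaxWeightBasis M v S B) {e : α} (heS : e ∈ S) (heB : e ∉ B) :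
    e ∈ M.closure {y ∈ B | v e < v y} := by
  obtain ⟨hB, hmax⟩ := hB
  set A : Set α := {y ∈ B | v e < v y} with hA
  by_contra hecl
  have hBfin : B.Finite := hE.subset (hB.subset.trans hSE)
  have heE : e ∈ M.E := hSE heS
  -- the collection of sets between A and B whose closure contains e
  set 𝒞 : Set (Set α) := {C | A ⊆ C ∧ C ⊆ B ∧ e ∈ M.closure C} with h𝒞
  have h𝒞fin : 𝒞.Finite := (hBfin.finite_subsets).subset fun C hC => hC.2.1
  have hB𝒞 : B ∈ 𝒞 := ⟨fun y hy => hy.1, subset_rfl, hB.subset_closure heS⟩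
  obtain ⟨A', hA'𝒞, hA'min⟩ : ∃ A' ∈ 𝒞, ∀ a' ∈ 𝒞, id a' ≤ id A' → id A' = id a' := by
    obtain ⟨A', hA'⟩ := h𝒞fin.exists_minimal ⟨B, hB𝒞⟩
    exact ⟨A', hA'.prop, fun a' ha' hle => le_antisymm (hA'.le_of_le ha' hle) hle⟩
  obtain ⟨hAA', hA'B, heA'⟩ := hA'𝒞
  -- A' strictly contains A, pick y ∈ A' \ A
  have hne : ¬ A' ⊆ A := fun h => hecl (M.closure_subset_closure h heA')
  obtain ⟨y, hyA', hyA⟩ := Set.not_subset.1 hne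
  have hyB : y ∈ B := hA'B hyA'
  have hyE : y ∈ M.E := hB.indep.subset_ground hyB
  have hye : y ≠ e := fun h => heB (h ▸ hyB)
  have hvy : v y < v e := by
    have hle : ¬ v e < v y := fun h => hyA ⟨hyB, h⟩
    rcases lt_or_eq_of_le (not_lt.1 hle) with h | h
    · exact h
    · exact absurd (hvinj hyE heE h) hye
  -- e ∉ closure (A' \ {y}) by minimality
  have hecl' : e ∉ M.closure (A' \ {y}) := by
    intro hmem
    have hmem𝒞 : A' \ {y} ∈ 𝒞 :=
      ⟨subset_diff_singleton hAA' hyA, (diff_subset).trans hA'B, hmem⟩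
    have h := hA'min _ hmem𝒞 (diff_subset)
    simp only [id] at h
    rw [h] at hyA'
    exact hyA'.2 rfl
  -- exchange: y ∈ closure (insert e (A' \ {y}))
  have hex : y ∈ M.closure (insert e (A' \ {y})) \ M.closure (A' \ {y}) := by
    refine Matroid.closure_exchange ⟨?_, hecl'⟩
    rwa [insert_diff_singleton, insert_eq_of_mem hyA']
  -- e ∉ closure (B \ {y})
  have heclB : e ∉ M.closure (B \ {y}) := by
    intro hmem
    have h1 : insert e (A' \ {y}) ⊆ M.closure (B \ {y}) := by
      refine insert_subset hmem ?_
      exact (diff_subset_diff_left hA'B).trans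
        (M.subset_closure (B \ {y}) ((diff_subset).trans hB.indep.subset_ground))
    have h2 : y ∈ M.closure (B \ {y}) := by
      have := M.closure_subset_closure_of_subset_closure h1
      exact this hex.1
    exact hB.indep.notMem_closure_diff_of_mem hyB h2
  -- B' := insert e (B \ {y}) is independent
  have hBdiff : M.Indep (B \ {y}) := hB.indep.subset diff_subset
  have hB'indep : M.Indep (insert e (B \ {y})) := by
    rw [hBdiff.insert_indep_iff_of_notMem (fun h => heB h.1)]
    exact ⟨heE, heclB⟩
  -- B' is a basis of S
  have hB'sub : insert e (B \ {y}) ⊆ S :=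
    insert_subset heS ((diff_subset).trans hB.subset)
  have hyclB' : y ∈ M.closure (insert e (B \ {y})) := by
    refine M.closure_subset_closure ?_ hex.1
    exact insert_subset_insert (diff_subset_diff_left hA'B)
  have hspan : S ⊆ M.closure (insert e (B \ {y})) := by
    have h1 : M.closure (insert y (insert e (B \ {y}))) = M.closure (insert e (B \ {y})) :=
      Matroid.closure_insert_eq_of_mem_closure hyclB'
    have h2 : B ⊆ insert y (insert e (B \ {y})) := by
      intro z hz
      by_cases hzy : z = y
      · exact hzy ▸ mem_insert _ _
      · exact mem_insert_of_mem _ (mem_insert_of_mem _ ⟨hz, hzy⟩)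
    calc S ⊆ M.closure B := hB.subset_closure
    _ ⊆ M.closure (insert y (insert e (B \ {y}))) := M.closure_subset_closure h2
    _ = M.closure (insert e (B \ {y})) := h1
  have hB'basis : M.IsBasis (insert e (B \ {y})) S :=
    hB'indep.isBasis_of_subset_of_subset_closure hB'sub hspan
  -- weight comparison: contradiction
  have hsum := hmax _ hB'basis
  have hfinBd : (B \ {y}).Finite := hBfin.subset diff_subset
  have h1 : ∑ᶠ x ∈ insert e (B \ {y}), v x = v e + ∑ᶠ x ∈ B \ {y}, v x :=
    finsum_mem_insert v (fun h => heB h.1) hfinBd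
  have h2 : ∑ᶠ x ∈ B, v x = v y + ∑ᶠ x ∈ B \ {y}, v x := by
    conv_lhs => rw [show B = insert y (B \ {y}) by
      rw [insert_diff_singleton, insert_eq_of_mem hyB]]
    exact finsum_mem_insert v (fun h => h.2 rfl) hfinBd
  rw [h1, h2] at hsum
  linarith

/-- For `T ⊆ S ⊆ E` and an injective nonnegative weight function,
a max-weight basis of `S` intersected with `T` is contained in any max-weight basis of `T`. -/
theorem maxWeightBasis_inter_subset {α : Type*} (M : Matroid α) (hE : M.E.Finite)
    (v : α → ℝ) (hv0 : ∀ x ∈ M.E, 0 ≤ v x) (hvinj : Set.InjOn v M.E)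
    (S T : Set α) (hTS : T ⊆ S) (hSE : S ⊆ M.E)
    (B_S B_T : Set α)
    (hBS : IsMaxWeightBasis M v S B_S) (hBT : IsMaxWeightBasis M v T B_T) :
    B_S ∩ T ⊆ B_T := by
  rintro x ⟨hxBS, hxT⟩
  by_contra hxBT
  have hTE : T ⊆ M.E := hTS.trans hSE
  -- x ∈ closure of the heavier elements of B_T
  have h1 : x ∈ M.closure {y ∈ B_T | v x < v y} :=
    mem_closure_heavier M hE v hvinj T hTE B_T hBT hxT hxBT
  -- every heavier element of B_T lies in closure of heavier elements of B_S
  have h2 : {y ∈ B_T | v x < v y} ⊆ M.closure (B_S \ {x}) := by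
    rintro y ⟨hyBT, hvy⟩
    have hyS : y ∈ S := hTS (hBT.1.subset hyBT)
    by_cases hyBS : y ∈ B_S
    · have hyx : y ≠ x := fun h => lt_irrefl (v x) (h ▸ hvy)
      exact M.subset_closure (B_S \ {x}) ((diff_subset).trans hBS.1.indep.subset_ground)
        ⟨hyBS, hyx⟩
    · have h3 : y ∈ M.closure {z ∈ B_S | v y < v z} :=
        mem_closure_heavier M hE v hvinj S hSE B_S hBS hyS hyBS
      refine M.closure_subset_closure ?_ h3
      rintro z ⟨hzBS, hvz⟩
      exact ⟨hzBS, fun h => lt_irrefl (v x) (hvy.trans (hvz.trans_le (h ▸ le_refl _)))⟩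
  have h4 : x ∈ M.closure (B_S \ {x}) := by
    have := M.closure_subset_closure_of_subset_closure h2
    exact this h1
  exact hBS.1.indep.notMem_closure_diff_of_mem hxBS h4
end

section
/- Let M be a matroid with finite ground set E, let v : E → ℝ be a weight function taking nonnegative values that is injective on E, let S ⊆ E, and let c ∈ ℝ. Set T = {u ∈ S : v(u) ≥ c}. If B_S is a max-weight basis of S and B_T is a max-weight basis of T, then B_S ∩ T = B_T. -/
open scoped BigOperators

open Set

/-- Sum after a single-element swap. -/
lemma finsum_swap_aux {α : Type*} (v : α → ℝ) {B : Set α} (hBfin : B.Finite)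
    {x y : α} (hy : y ∈ B) (hx : x ∉ B) :
    ∑ᶠ z ∈ (insert x B \ {y} : Set α), v z = ∑ᶠ z ∈ B, v z + v x - v y := by
  classical
  have hfin' : (insert x B \ {y} : Set α).Finite := (hBfin.insert x).subset diff_subset
  rw [finsum_mem_eq_finite_toFinset_sum v hfin', finsum_mem_eq_finite_toFinset_sum v hBfin]
  have h1 : hfin'.toFinset = (insert x hBfin.toFinset).erase y := by
    ext a; simp [and_comm]
  rw [h1]
  have hy' : y ∈ insert x hBfin.toFinset := by simp [hy]
  have hxB : x ∉ hBfin.toFinset := by simpa using hx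
  have := Finset.sum_erase_add (insert x hBfin.toFinset) v hy'
  rw [Finset.sum_insert hxB] at this
  linarith

/-- Key exchange lemma: if `B` is a max-weight basis of `S` and `x ∈ S \ B`, then
`x` lies in the closure of the elements of `B` of weight at least `v x`. -/
lemma mem_closure_highpart {α : Type*} {M : Matroid α} (hE : M.E.Finite) {v : α → ℝ}
    {S B : Set α} (hSE : S ⊆ M.E) (hB : IsMaxWeightBasis M v S B) {x : α}
    (hxS : x ∈ S) (hxB : x ∉ B) :
    x ∈ M.closure {y ∈ B | v x ≤ v y} := by
  by_contra hcl
  set H : Set α := {y ∈ B | v x ≤ v y} with hH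
  have hHB : H ⊆ B := fun y hy => hy.1
  have hBind : M.Indep B := hB.1.indep
  have hBE : B ⊆ M.E := hBind.subset_ground
  have hxE : x ∈ M.E := hSE hxS
  have hxH : x ∉ H := fun h => hxB (hHB h)
  have hins : M.Indep (insert x H) := by
    rw [(hBind.subset hHB).insert_indep_iff_of_notMem hxH]
    exact ⟨hxE, hcl⟩
  have hxcl : x ∈ M.closure B := hB.1.subset_closure hxS
  have hBbasis : M.IsBasis B (insert x B) :=
    hBind.isBasis_of_subset_of_subset_closure (subset_insert _ _)
      (insert_subset hxcl (M.subset_closure B hBE))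
  obtain ⟨J, hJ, hJsub⟩ := hins.subset_isBasis_of_subset
      (insert_subset_insert hHB) (insert_subset hxE hBE)
  have hxJ : x ∈ J := hJsub (mem_insert _ _)
  have hJB : J ⊆ insert x B := hJ.subset
  have hBfin : B.Finite := hE.subset hBE
  have hcard : J.encard = B.encard := hJ.encard_eq_encard hBbasis
  have hJ'B : J \ {x} ⊆ B := by
    rintro y ⟨hyJ, hyx⟩
    rcases hJB hyJ with h | h
    · exact absurd h hyx
    · exact h
  have h1 : (J \ {x}).encard + 1 = J.encard := Set.encard_diff_singleton_add_one hxJ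
  have h2 : (B \ (J \ {x})).encard + (J \ {x}).encard = B.encard :=
    Set.encard_diff_add_encard_of_subset hJ'B
  have hJ'ne : (J \ {x}).encard ≠ ⊤ := (hBfin.subset hJ'B).encard_lt_top.ne
  have hone : (B \ (J \ {x})).encard = 1 := by
    have : (B \ (J \ {x})).encard + (J \ {x}).encard = 1 + (J \ {x}).encard := by
      rw [h2, ← hcard, ← h1, add_comm]
    exact WithTop.add_right_cancel hJ'ne this
  obtain ⟨y, hyeq⟩ := Set.encard_eq_one.mp hone
  have hyB : y ∈ B := by
    have : y ∈ B \ (J \ {x}) := by rw [hyeq]; exact rfl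
    exact this.1
  have hJ'eq : J \ {x} = B \ {y} := by
    rw [← Set.diff_diff_cancel_left hJ'B, hyeq]
  have hxy : x ≠ y := fun h => hxB (h ▸ hyB)
  have hJeq : J = insert x B \ {y} := by
    have hJi : J = insert x (J \ {x}) := by
      rw [Set.insert_diff_singleton, Set.insert_eq_self.mpr hxJ]
    rw [hJi, hJ'eq, Set.insert_diff_singleton_comm hxy]
  have hyH : y ∉ H := by
    intro h
    have hyJ' : H ⊆ J \ {x} := by
      intro z hz
      exact ⟨hJsub (mem_insert_of_mem _ hz), fun hzx => hxH (hzx ▸ hz)⟩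
    have := hyJ' h
    rw [hJ'eq] at this
    exact this.2 rfl
  have hvy : v y < v x := lt_of_not_ge fun h => hyH ⟨hyB, h⟩
  have hBbase : (M.restrict S).IsBase B := hB.1.isBase_restrict
  have hJindS : (M.restrict S).Indep J := by
    rw [Matroid.restrict_indep_iff]
    exact ⟨hJ.indep, hJB.trans (insert_subset hxS hB.1.subset)⟩
  have hJbase : (M.restrict S).IsBase (insert x B \ {y}) :=
    hBbase.exchange_isBase_of_indep' hyB hxB (hJeq ▸ hJindS)
  have hJbasis : M.IsBasis (insert x B \ {y}) S :=
    (Matroid.isBase_restrict_iff hSE).mp hJbase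
  have hle := hB.2 _ hJbasis
  rw [finsum_swap_aux v hBfin hyB hxB] at hle
  linarith

/-- If `T = {u ∈ S | v u ≥ c}` consists of the top-weight elements of `S`,
then a max-weight basis of `S` intersected with `T` equals any max-weight basis of `T`. -/
theorem maxWeightBasis_inter_top_eq {α : Type*} (M : Matroid α) (hE : M.E.Finite)
    (v : α → ℝ) (hv0 : ∀ x ∈ M.E, 0 ≤ v x) (hvinj : Set.InjOn v M.E)
    (S : Set α) (hSE : S ⊆ M.E) (c : ℝ)
    (B_S B_T : Set α)
    (hBS : IsMaxWeightBasis M v S B_S)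
    (hBT : IsMaxWeightBasis M v {u ∈ S | c ≤ v u} B_T) :
    B_S ∩ {u ∈ S | c ≤ v u} = B_T := by
  set T : Set α := {u ∈ S | c ≤ v u} with hT
  have hTS : T ⊆ S := fun u hu => hu.1
  have hTE : T ⊆ M.E := hTS.trans hSE
  have hBSsub : B_S ⊆ S := hBS.1.subset
  have hBTsub : B_T ⊆ T := hBT.1.subset
  by_contra hne
  set D : Set α := ((B_S ∩ T) \ B_T) ∪ (B_T \ (B_S ∩ T)) with hD
  have hDE : D ⊆ M.E := by
    rintro y (hy | hy)
    · exact hSE (hBSsub hy.1.1)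
    · exact hTE (hBTsub hy.1)
  have hDne : D.Nonempty := by
    rw [Set.nonempty_iff_ne_empty]
    intro h
    rw [hD, Set.union_empty_iff, Set.diff_eq_empty, Set.diff_eq_empty] at h
    exact hne (h.1.antisymm h.2)
  obtain ⟨x, hxD, hmax⟩ : ∃ a ∈ D, ∀ a' ∈ D, v a ≤ v a' → v a = v a' := by
    obtain ⟨a, ha, h⟩ := Set.exists_max_image D v (hE.subset hDE) hDne
    exact ⟨a, ha, fun b hb hab => le_antisymm hab (h b hb)⟩
  have hxE : x ∈ M.E := hDE hxD
  have hmax' : ∀ y ∈ D, v x ≤ v y → y = x := by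
    intro y hy h
    exact hvinj (hDE hy) hxE ((hmax y hy h).symm)
  rcases hxD with hx1 | hx2
  · -- x ∈ B_S ∩ T, x ∉ B_T
    have hxT : x ∈ T := hx1.1.2
    have hxBT : x ∉ B_T := hx1.2
    have hcl := mem_closure_highpart hE hTE hBT hxT hxBT
    set H : Set α := {y ∈ B_T | v x ≤ v y} with hH
    have hHsub : H ⊆ B_S := by
      rintro y ⟨hyBT, hvxy⟩
      by_contra hyBS
      have hyD : y ∈ D := Or.inr ⟨hyBT, fun h => hyBS h.1⟩
      have := hmax' y hyD hvxy
      exact hxBT (this ▸ hyBT)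
    have hxBS : x ∈ B_S := hx1.1.1
    have hxH : x ∉ H := fun h => hxBT h.1
    have hind : M.Indep (insert x H) := hBS.1.indep.subset (insert_subset hxBS hHsub)
    have hnot := hind.notMem_closure_diff_of_mem (mem_insert x H)
    rw [Set.insert_diff_self_of_notMem hxH] at hnot
    exact hnot hcl
  · -- x ∈ B_T, x ∉ B_S ∩ T
    have hxT : x ∈ T := hBTsub hx2.1
    have hxS : x ∈ S := hTS hxT
    have hxBS : x ∉ B_S := fun h => hx2.2 ⟨h, hxT⟩
    have hcl := mem_closure_highpart hE hSE hBS hxS hxBS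
    set H : Set α := {y ∈ B_S | v x ≤ v y} with hH
    have hHsub : H ⊆ B_T := by
      rintro y ⟨hyBS, hvxy⟩
      have hyT : y ∈ T := ⟨hBSsub hyBS, le_trans hxT.2 hvxy⟩
      by_contra hyBT
      have hyD : y ∈ D := Or.inl ⟨⟨hyBS, hyT⟩, hyBT⟩
      have := hmax' y hyD hvxy
      exact hxBS (this ▸ hyBS)
    have hxH : x ∉ H := fun h => hxBS h.1
    have hind : M.Indep (insert x H) := hBT.1.indep.subset (insert_subset hx2.1 hHsub)
    have hnot := hind.notMem_closure_diff_of_mem (mem_insert x H)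
    rw [Set.insert_diff_self_of_notMem hxH] at hnot
    exact hnot hcl
end

section
/- Let M be a matroid with finite ground set E, let v : E → ℝ be a weight function taking nonnegative values that is injective on E, let S ⊆ E, and let u ∈ E. If B is a max-weight basis of S and B' is a max-weight basis of S ∪ {u}, then the set difference B \ B' has cardinality at most 1. -/
open scoped BigOperators

open Set

section Aux

variable {α : Type*} {M : Matroid α}

/-- A substitute for the fundamental circuit of `a` over an independent set `B`. -/
lemma exists_fundAux {B : Set α} {a : α} (hBfin : B.Finite) (hB : M.Indep B)
    (haE : a ∈ M.E) (haB : a ∉ B) (hacl : a ∈ M.closure B) :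
    ∃ J ⊆ B, ¬ M.Indep (insert a J) ∧
      (∀ f ∈ J, f ∈ M.closure (insert a (J \ {f}))) ∧
      (∀ f ∈ J, a ∉ M.closure (B \ {f})) := by
  have hsne : {n : ℕ | ∃ J, J ⊆ B ∧ J.ncard = n ∧ a ∈ M.closure J}.Nonempty :=
    ⟨B.ncard, B, rfl.subset, rfl, hacl⟩
  obtain ⟨J, hJB, hJcard, hJcl⟩ := Nat.sInf_mem hsne
  have hJfin : J.Finite := hBfin.subset hJB
  have hJind : M.Indep J := hB.subset hJB
  have haJ : a ∉ J := fun h => haB (hJB h)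
  have hmin : ∀ f ∈ J, a ∉ M.closure (J \ {f}) := by
    intro f hf hcon
    have hmem : (J \ {f}).ncard ∈ {n : ℕ | ∃ J, J ⊆ B ∧ J.ncard = n ∧ a ∈ M.closure J} :=
      ⟨J \ {f}, diff_subset.trans hJB, rfl, hcon⟩
    have hlt : (J \ {f}).ncard < J.ncard := Set.ncard_diff_singleton_lt_of_mem hf hJfin
    have := Nat.sInf_le hmem
    omega
  have hP5 : ∀ f ∈ J, f ∈ M.closure (insert a (J \ {f})) := by
    intro f hf
    have h1 : a ∈ M.closure (insert f (J \ {f})) := by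
      rwa [Set.insert_diff_singleton, Set.insert_eq_of_mem hf]
    exact (Matroid.closure_exchange ⟨h1, hmin f hf⟩).1
  refine ⟨J, hJB, ?_, hP5, ?_⟩
  · intro h
    exact ((hJind.insert_indep_iff_of_notMem haJ).1 h).2 hJcl
  · intro f hf hcon
    have hmono : M.closure (insert a (J \ {f})) ⊆ M.closure (insert a (B \ {f})) :=
      M.closure_subset_closure (insert_subset_insert (diff_subset_diff_left hJB))
    have heq : M.closure (insert a (B \ {f})) = M.closure (B \ {f}) :=
      Matroid.closure_insert_eq_of_mem_closure hcon
    have hf' : f ∈ M.closure (B \ {f}) := heq ▸ hmono (hP5 f hf)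
    exact hB.notMem_closure_diff_of_mem (hJB hf) hf'

/-- Exchanging an element into a basis. -/
lemma basis_exchangeAux {B X : Set α} {a f : α} (hB : M.IsBasis B X) (haX : a ∈ X) (haB : a ∉ B)
    (hf : f ∈ B) (hcl : a ∉ M.closure (B \ {f})) : M.IsBasis (insert a (B \ {f})) X := by
  have hXE : X ⊆ M.E := hB.subset_ground
  have hne : a ≠ f := fun h => haB (h ▸ hf)
  have hind : M.Indep (insert a (B \ {f})) := by
    rw [(hB.indep.subset diff_subset).insert_indep_iff_of_notMem (fun h => haB h.1)]
    exact ⟨hXE haX, hcl⟩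
  have hBase : (M.restrict X).IsBase B := hB.restrict_isBase
  have hind' : (M.restrict X).Indep (insert a B \ {f}) := by
    rw [Matroid.restrict_indep_iff, ← Set.insert_diff_singleton_comm hne]
    exact ⟨hind, (insert_subset_insert diff_subset).trans (insert_subset haX hB.subset)⟩
  have hb := hBase.exchange_isBase_of_indep' hf haB hind'
  rw [← Set.insert_diff_singleton_comm hne] at hb
  exact (Matroid.isBase_restrict_iff hXE).1 hb

/-- Weight comparison after an exchange. -/
lemma weight_exchange_ltAux {v : α → ℝ} (hvinj : Set.InjOn v M.E) {T : Set α} {a f : α}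
    (hT : T.Finite) (hTE : T ⊆ M.E) (haE : a ∈ M.E) (haT : a ∉ T) (hf : f ∈ T)
    (hle : ∑ᶠ x ∈ insert a (T \ {f}), v x ≤ ∑ᶠ x ∈ T, v x) : v a < v f := by
  have h1 : ∑ᶠ x ∈ insert a (T \ {f}), v x = v a + ∑ᶠ x ∈ T \ {f}, v x :=
    finsum_mem_insert v (fun h => haT h.1) (hT.subset diff_subset)
  have h2 : ∑ᶠ x ∈ T, v x = v f + ∑ᶠ x ∈ T \ {f}, v x := by
    conv_lhs => rw [show T = insert f (T \ {f}) by
      rw [Set.insert_diff_singleton, Set.insert_eq_of_mem hf]]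
    exact finsum_mem_insert v (fun h => h.2 rfl) (hT.subset diff_subset)
  have hane : a ≠ f := fun h => haT (h ▸ hf)
  have hle' : v a ≤ v f := by rw [h1, h2] at hle; linarith
  exact lt_of_le_of_ne hle' (fun h => hane (hvinj haE (hTE hf) h))

/-- No element of `B₁ \ B₂` can dominate all of `B₂ \ B₁` if `B₂` is a max-weight basis. -/
lemma no_max_diffAux {v : α → ℝ} (hE : M.E.Finite) (hvinj : Set.InjOn v M.E)
    {T B₁ B₂ : Set α} (hT : T ⊆ M.E) (hB₁ : M.IsBasis B₁ T)
    (hB₂ : IsMaxWeightBasis M v T B₂) {m : α} (hm : m ∈ B₁ \ B₂)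
    (hmax : ∀ x ∈ B₂ \ B₁, v x ≤ v m) : False := by
  obtain ⟨hB₂b, hB₂max⟩ := hB₂
  have hB₂fin : B₂.Finite := hE.subset hB₂b.indep.subset_ground
  have hmT : m ∈ T := hB₁.subset hm.1
  have hmcl : m ∈ M.closure B₂ := hB₂b.subset_closure hmT
  obtain ⟨J, hJB, hJdep, _, hJP3⟩ := exists_fundAux hB₂fin hB₂b.indep (hT hmT) hm.2 hmcl
  have hex : ∃ f ∈ J, f ∉ B₁ := by
    by_contra h
    push_neg at h
    exact hJdep (hB₁.indep.subset (insert_subset hm.1 fun x hx => h x hx))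
  obtain ⟨f, hfJ, hfB₁⟩ := hex
  have hfB₂ := hJB hfJ
  have hbasis := basis_exchangeAux hB₂b hmT hm.2 hfB₂ (hJP3 f hfJ)
  have hlt := weight_exchange_ltAux hvinj hB₂fin hB₂b.indep.subset_ground (hT hmT) hm.2 hfB₂
    (hB₂max _ hbasis)
  have := hmax f ⟨hfB₂, hfB₁⟩
  linarith

/-- With injective weights, max-weight bases are unique. -/
lemma maxweight_uniqueAux {v : α → ℝ} (hE : M.E.Finite) (hvinj : Set.InjOn v M.E)
    {T B₁ B₂ : Set α} (hT : T ⊆ M.E)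
    (h₁ : IsMaxWeightBasis M v T B₁) (h₂ : IsMaxWeightBasis M v T B₂) : B₁ = B₂ := by
  by_contra hne
  have hfin : ((B₁ \ B₂) ∪ (B₂ \ B₁)).Finite :=
    ((hE.subset h₁.1.indep.subset_ground).subset diff_subset).union
      ((hE.subset h₂.1.indep.subset_ground).subset diff_subset)
  have hne' : ((B₁ \ B₂) ∪ (B₂ \ B₁)).Nonempty := by
    rw [Set.nonempty_iff_ne_empty]
    intro h
    rw [Set.union_empty_iff, Set.diff_eq_empty, Set.diff_eq_empty] at h
    exact hne (h.1.antisymm h.2)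
  obtain ⟨m, hm, hmax⟩ := Set.exists_max_image _ v hfin hne'
  obtain (hm | hm) : m ∈ B₁ \ B₂ ∨ m ∈ B₂ \ B₁ := hm
  · exact no_max_diffAux hE hvinj hT h₁.1 h₂ hm (fun x hx => hmax x (Or.inr hx))
  · exact no_max_diffAux hE hvinj hT h₂.1 h₁ hm (fun x hx => hmax x (Or.inl hx))

end Aux

/-- Adding one element `u` to `S` removes at most one element from
a max-weight basis: if `B` is a max-weight basis of `S` and `B'` one of `S ∪ {u}`,
then `B \ B'` has at most one element. -/
theorem maxWeightBasis_diff_insert_encard_le_one {α : Type*} (M : Matroid α)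
    (hE : M.E.Finite)
    (v : α → ℝ) (hv0 : ∀ x ∈ M.E, 0 ≤ v x) (hvinj : Set.InjOn v M.E)
    (S : Set α) (hSE : S ⊆ M.E) (u : α) (hu : u ∈ M.E)
    (B B' : Set α)
    (hB : IsMaxWeightBasis M v S B)
    (hB' : IsMaxWeightBasis M v (S ∪ {u}) B') :
    (B \ B').encard ≤ 1 := by
  classical
  by_cases huS : u ∈ S
  · have hSu : S ∪ {u} = S := by rw [Set.union_singleton, Set.insert_eq_of_mem huS]
    rw [hSu] at hB'
    have hBB' : B = B' := maxweight_uniqueAux hE hvinj hSE hB hB'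
    rw [hBB', Set.diff_self, Set.encard_empty]
    exact zero_le_one
  obtain ⟨hBb, hBmax⟩ := hB
  obtain ⟨hB'b, hB'max⟩ := hB'
  have hSuE : S ∪ {u} ⊆ M.E := Set.union_subset hSE (by simpa using hu)
  have hBfin : B.Finite := hE.subset hBb.indep.subset_ground
  have hB'fin : B'.Finite := hE.subset hB'b.indep.subset_ground
  have hCS : B' \ {u} ⊆ S := by
    intro x hx
    rcases hB'b.subset hx.1 with h | h
    · exact h
    · exact absurd h hx.2
  have hcard : B.encard ≤ B'.encard := by
    obtain ⟨B₂, hB₂, hBB₂⟩ := hBb.indep.subset_isBasis_of_subset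
      (hBb.subset.trans Set.subset_union_left) hSuE
    calc B.encard ≤ B₂.encard := Set.encard_mono hBB₂
      _ = B'.encard := hB₂.encard_eq_encard hB'b
  -- Main claim : `B' \ {u} ⊆ B`.
  have hclaim : B' \ {u} ⊆ B := by
    by_contra hcon
    obtain ⟨c₀, hc₀⟩ : ((B' \ {u}) \ B).Nonempty := by
      rw [Set.nonempty_iff_ne_empty]
      intro h
      exact hcon (Set.diff_eq_empty.1 h)
    -- Fact A : every element of `(B' \ {u}) \ B` is dominated by an element of `B`
    -- outside of a prescribed independent set.
    have factA : ∀ c ∈ (B' \ {u}) \ B, ∀ I : Set α, M.Indep I → c ∈ I →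
        ∃ b ∈ B \ I, v c < v b := by
      intro c hc I hI hcI
      have hcS : c ∈ S := hCS hc.1
      have hccl : c ∈ M.closure B := hBb.subset_closure hcS
      obtain ⟨J, hJB, hJdep, _, hJP3⟩ := exists_fundAux hBfin hBb.indep (hSE hcS) hc.2 hccl
      have hex : ∃ b ∈ J, b ∉ I := by
        by_contra h
        push_neg at h
        exact hJdep (hI.subset (insert_subset hcI fun x hx => h x hx))
      obtain ⟨b, hbJ, hbI⟩ := hex
      have hbB := hJB hbJ
      have hbasis := basis_exchangeAux hBb hcS hc.2 hbB (hJP3 b hbJ)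
      exact ⟨b, ⟨hbB, hbI⟩, weight_exchange_ltAux hvinj hBfin hBb.indep.subset_ground
        (hSE hcS) hc.2 hbB (hBmax _ hbasis)⟩
    -- Fact B : fundamental sets over `B'` for elements of `B \ B'`.
    have factB : ∀ b ∈ B \ B', ∃ J ⊆ B', ¬ M.Indep (insert b J) ∧
        (∀ f ∈ J, f ∈ M.closure (insert b (J \ {f}))) ∧
        (∀ f ∈ J, M.IsBasis (insert b (B' \ {f})) (S ∪ {u}) ∧ v b < v f) := by
      intro b hb
      have hbS : b ∈ S := hBb.subset hb.1
      have hbSu : b ∈ S ∪ {u} := Or.inl hbS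
      have hbcl : b ∈ M.closure B' := hB'b.subset_closure hbSu
      obtain ⟨J, hJB', hJdep, hJP5, hJP3⟩ := exists_fundAux hB'fin hB'b.indep (hSE hbS) hb.2 hbcl
      refine ⟨J, hJB', hJdep, hJP5, fun f hf => ?_⟩
      have hbasis := basis_exchangeAux hB'b hbSu hb.2 (hJB' hf) (hJP3 f hf)
      exact ⟨hbasis, weight_exchange_ltAux hvinj hB'fin hB'b.indep.subset_ground
        (hSE hbS) hb.2 (hJB' hf) (hB'max _ hbasis)⟩
    -- `B \ B'` is nonempty; pick its maximum `bs`.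
    obtain ⟨b₀, hb₀, _⟩ := factA c₀ hc₀ B' hB'b.indep hc₀.1.1
    obtain ⟨bs, hbs, hbsmax⟩ := Set.exists_max_image (B \ B') v (hBfin.subset diff_subset)
      ⟨b₀, hb₀⟩
    obtain ⟨Js, hJsB', hJsdep, hJsP5, hJsX⟩ := factB bs hbs
    have hJs_sub : ∀ x ∈ Js, x ≠ u → x ∈ B ∩ B' := by
      intro x hx hxu
      have hxB' := hJsB' hx
      by_cases hxB : x ∈ B
      · exact ⟨hxB, hxB'⟩
      exfalso
      obtain ⟨b, hb, hlt⟩ := factA x ⟨⟨hxB', hxu⟩, hxB⟩ B' hB'b.indep hxB'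
      have h1 : v bs < v x := (hJsX x hx).2
      have h2 : v b ≤ v bs := hbsmax b hb
      linarith
    have huJs : u ∈ Js := by
      by_contra h
      exact hJsdep (hBb.indep.subset (insert_subset hbs.1
        fun x hx => (hJs_sub x hx (fun hxu => h (hxu ▸ hx))).1))
    -- `D = insert bs (B' \ {u})` is a basis of `S`.
    have hDb' : M.IsBasis (insert bs (B' \ {u})) (S ∪ {u}) := (hJsX u huJs).1
    have hDS : insert bs (B' \ {u}) ⊆ S := insert_subset (hBb.subset hbs.1) hCS
    have hDb : M.IsBasis (insert bs (B' \ {u})) S := hDb'.isBasis_subset hDS Set.subset_union_left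
    have hDfin : (insert bs (B' \ {u})).Finite := hE.subset hDb.indep.subset_ground
    have hc₀D : c₀ ∈ insert bs (B' \ {u}) \ B := ⟨Or.inr hc₀.1, hc₀.2⟩
    obtain ⟨m, hm, hmmax⟩ := Set.exists_max_image
      ((B \ insert bs (B' \ {u})) ∪ (insert bs (B' \ {u}) \ B)) v
      ((hBfin.subset diff_subset).union (hDfin.subset diff_subset)) ⟨c₀, Or.inr hc₀D⟩
    obtain (hmB | hmD) : m ∈ B \ insert bs (B' \ {u}) ∨ m ∈ insert bs (B' \ {u}) \ B := hm
    · -- `m ∈ B \ D` : build the final contradiction.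
      have hmB' : m ∈ B \ B' := by
        refine ⟨hmB.1, fun h => ?_⟩
        have hmu : m ≠ u := fun h' => huS (h' ▸ hBb.subset hmB.1)
        exact hmB.2 (Or.inr ⟨h, hmu⟩)
      obtain ⟨Ja, hJaB', hJadep, hJaP5, hJaX⟩ := factB m hmB'
      have hJa_sub : ∀ x ∈ Ja, x ≠ u → x ∈ B ∩ B' := by
        intro x hx hxu
        by_cases hxB : x ∈ B
        · exact ⟨hxB, hJaB' hx⟩
        exfalso
        have h1 : v m < v x := (hJaX x hx).2
        have h2 : v x ≤ v m := hmmax x (Or.inr ⟨Or.inr ⟨hJaB' hx, hxu⟩, hxB⟩)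
        linarith
      have huJa : u ∈ Ja := by
        by_contra h
        exact hJadep (hBb.indep.subset (insert_subset hmB.1
          fun x hx => (hJa_sub x hx (fun hxu => h (hxu ▸ hx))).1))
      set P : Set α := (Ja ∪ Js) \ {u} with hPdef
      have hPBB' : P ⊆ B ∩ B' := by
        rintro x ⟨hx, hxu⟩
        rcases hx with h | h
        · exact hJa_sub x h hxu
        · exact hJs_sub x h hxu
      have huP : u ∉ P := fun h => h.2 rfl
      have hPuind : M.Indep (insert u P) :=
        hB'b.indep.subset (insert_subset (hJsB' huJs) fun x hx => (hPBB' hx).2)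
      have hucl : u ∉ M.closure P := by
        have h := hPuind.notMem_closure_diff_of_mem (Set.mem_insert u P)
        rwa [Set.insert_diff_self_of_notMem huP] at h
      have h1 : u ∈ M.closure (insert m P) :=
        M.closure_subset_closure (insert_subset_insert
          (diff_subset_diff_left Set.subset_union_left)) (hJaP5 u huJa)
      have h2 : u ∈ M.closure (insert bs P) :=
        M.closure_subset_closure (insert_subset_insert
          (diff_subset_diff_left Set.subset_union_right)) (hJsP5 u huJs)
      have hmcl : m ∈ M.closure (insert u P) := (Matroid.closure_exchange ⟨h1, hucl⟩).1
      have hbscl : bs ∈ M.closure (insert u P) := (Matroid.closure_exchange ⟨h2, hucl⟩).1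
      have hQB : insert m (insert bs P) ⊆ B :=
        insert_subset hmB.1 (insert_subset hbs.1 fun x hx => (hPBB' hx).1)
      have hQind : M.Indep (insert m (insert bs P)) := hBb.indep.subset hQB
      have hQcl : insert m (insert bs P) ⊆ M.closure (insert u P) :=
        insert_subset hmcl (insert_subset hbscl
          (fun x hx => M.subset_closure _ hPuind.subset_ground (Or.inr hx)))
      obtain ⟨Q₂, hQ₂, hQQ₂⟩ := hQind.subset_isBasis_of_subset hQcl
        (M.closure_subset_ground _)
      have hcardeq : Q₂.encard = (insert u P).encard :=
        hQ₂.encard_eq_encard hPuind.isBasis_closure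
      have hQle : (insert m (insert bs P)).encard ≤ (insert u P).encard :=
        hcardeq ▸ Set.encard_mono hQQ₂
      have hPfin : P.Finite := hB'fin.subset fun x hx => (hPBB' hx).2
      have hmP : m ∉ insert bs P := by
        rintro (h | h)
        · exact hmB.2 (Set.mem_insert_iff.2 (Or.inl h))
        · exact hmB'.2 (hPBB' h).2
      have hbsP : bs ∉ P := fun h => hbs.2 (hPBB' h).2
      rw [Set.encard_insert_of_notMem hmP, Set.encard_insert_of_notMem hbsP,
        Set.encard_insert_of_notMem huP] at hQle
      obtain ⟨n, hn⟩ : ∃ n : ℕ, P.encard = n := ⟨_, hPfin.encard_eq_coe_toFinset_card⟩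
      rw [hn] at hQle
      have : (n : ℕ∞) + 1 + 1 ≤ (n : ℕ∞) + 1 := hQle
      norm_cast at this
      omega
    · -- `m ∈ D \ B` : contradiction with Fact A.
      have hmC : m ∈ (B' \ {u}) \ B := by
        rcases hmD.1 with h | h
        · exact absurd (h ▸ hbs.1) hmD.2
        · exact ⟨h, hmD.2⟩
      obtain ⟨b, hb, hlt⟩ := factA m hmC (insert bs (B' \ {u})) hDb.indep hmD.1
      have := hmmax b (Or.inl hb)
      linarith
  -- Conclude from the claim.
  by_cases huB' : u ∈ B'
  · have hBC : B \ B' ⊆ B \ (B' \ {u}) := Set.diff_subset_diff_right diff_subset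
    have h1 : (B \ (B' \ {u})).encard + (B' \ {u}).encard = B.encard :=
      Set.encard_diff_add_encard_of_subset hclaim
    have h2 : B'.encard = (B' \ {u}).encard + 1 := by
      conv_lhs => rw [show B' = insert u (B' \ {u}) by
        rw [Set.insert_diff_singleton, Set.insert_eq_of_mem huB']]
      exact Set.encard_insert_of_notMem (fun h => h.2 rfl)
    obtain ⟨nc, hnc⟩ : ∃ n : ℕ, (B' \ {u}).encard = n :=
      ⟨_, (hB'fin.subset diff_subset).encard_eq_coe_toFinset_card⟩
    obtain ⟨nx, hnx⟩ : ∃ n : ℕ, (B \ (B' \ {u})).encard = n :=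
      ⟨_, (hBfin.subset diff_subset).encard_eq_coe_toFinset_card⟩
    obtain ⟨nb, hnb⟩ : ∃ n : ℕ, B.encard = n := ⟨_, hBfin.encard_eq_coe_toFinset_card⟩
    obtain ⟨nb', hnb'⟩ : ∃ n : ℕ, B'.encard = n := ⟨_, hB'fin.encard_eq_coe_toFinset_card⟩
    rw [hnc, hnx, hnb] at h1
    rw [hnc, hnb'] at h2
    rw [hnb, hnb'] at hcard
    have h1' : nx + nc = nb := by exact_mod_cast h1
    have h2' : nb' = nc + 1 := by exact_mod_cast h2
    have hcard' : nb ≤ nb' := by exact_mod_cast hcard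
    calc (B \ B').encard ≤ (B \ (B' \ {u})).encard := Set.encard_mono hBC
      _ ≤ 1 := by rw [hnx]; exact_mod_cast (by omega : nx ≤ 1)
  · have hB'B : B' ⊆ B := by
      rwa [Set.diff_singleton_eq_self huB'] at hclaim
    have hBB' : B' = B := hBfin.eq_of_subset_of_encard_le' hB'B hcard
    rw [hBB', Set.diff_self, Set.encard_empty]
    exact zero_le_one
end
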